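/- Let G be a 4×4 complex Hermitian positive semidefinite matrix indexed by (Fin 2) × (Fin 2) with trace 1 and rank exactly 3, and let λ₁ ≥ λ₂ ≥ λ₃ > 0 be its nonzero eigenvalues. Define f(x) = −x log₂ x − (1−x) log₂ (1−x) with 0 · log₂ 0 = 0. Then for every 4×4 unitary matrix U, the entropy of the reduced spatial coherence matrix of U G Uᴴ (entries ∑_i (U G Uᴴ) (k,i) (l,i)) and the entropy of the reduced polarization coherence matrix of U G Uᴴ (entries ∑_k (U G Uᴴ) (k,i) (k,j)) are both strictly positive; in particular these entropies are bounded below by f(λ₁ + λ₂) > 0. Hence the entropy of a rank-3 field — no matter how low — can never be fully concentrated into one degree of freedom: some entropy is always locked in each degree of freedom. -/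

import Mathlib

open Matrix ComplexOrder

/-- The von Neumann entropy (base 2) of a Hermitian matrix:
`S = -∑ μ_j log₂ μ_j` over its eigenvalues, with `0 · log₂ 0 = 0`
(automatic since `Real.logb 2 0 = 0`). -/
noncomputable def entropy {n : Type*} [Fintype n] [DecidableEq n] {M : Matrix n n ℂ}
    (hM : M.IsHermitian) : ℝ :=
  -∑ i, hM.eigenvalues i * Real.logb 2 (hM.eigenvalues i)

/-- The binary entropy function `f(x) = -x log₂ x - (1-x) log₂ (1-x)`, with `0 · log₂ 0 = 0`
(automatic since `Real.logb 2 0 = 0`). -/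
noncomputable def fEnt (x : ℝ) : ℝ :=
  -(x * Real.logb 2 x) - (1 - x) * Real.logb 2 (1 - x)

/-- The reduced spatial coherence matrix: trace out the polarization index. -/
noncomputable def redS (G : Matrix (Fin 2 × Fin 2) (Fin 2 × Fin 2) ℂ) :
    Matrix (Fin 2) (Fin 2) ℂ :=
  Matrix.of fun k l => ∑ i, G (k, i) (l, i)

/-- The reduced polarization coherence matrix: trace out the spatial index. -/
noncomputable def redP (G : Matrix (Fin 2 × Fin 2) (Fin 2 × Fin 2) ℂ) :
    Matrix (Fin 2) (Fin 2) ℂ :=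
  Matrix.of fun i j => ∑ k, G (k, i) (k, j)

/- ### Auxiliary lemmas -/

open scoped InnerProductSpace

section FEnt

lemma fEnt_eq (x : ℝ) : fEnt x = Real.binEntropy x / Real.log 2 := by
  simp only [fEnt, Real.binEntropy, Real.log_inv, Real.logb]
  ring

lemma fEnt_pos {s : ℝ} (h0 : 0 < s) (h1 : s < 1) : 0 < fEnt s := by
  rw [fEnt_eq]
  exact div_pos (Real.binEntropy_pos h0 h1) (Real.log_pos (by norm_num))

lemma fEnt_anti {s t : ℝ} (hs0 : 0 < s) (hs2 : s ≤ 2⁻¹) (h1 : s ≤ t) (h2 : t ≤ 1 - s) :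
    fEnt (1 - s) ≤ fEnt t := by
  rw [fEnt_eq, fEnt_eq]
  have hlog : (0:ℝ) < Real.log 2 := Real.log_pos (by norm_num)
  apply div_le_div_of_nonneg_right ?_ hlog.le
  rw [Real.binEntropy_one_sub]
  rcases le_total t 2⁻¹ with ht | ht
  · exact (Real.binEntropy_strictMonoOn.monotoneOn ⟨hs0.le, hs2⟩ ⟨hs0.le.trans h1, ht⟩ h1)
  · rw [← Real.binEntropy_one_sub t]
    exact Real.binEntropy_strictMonoOn.monotoneOn ⟨hs0.le, hs2⟩
      ⟨by linarith, by linarith⟩ (by linarith)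

end FEnt

section Spectral

variable {ι : Type*} [Fintype ι] [DecidableEq ι]

lemma eig_multiset_sum {lam : ι → ℝ} {l1 l2 l3 : ℝ}
    (heig : Finset.univ.val.map lam = ({l1, l2, l3, 0} : Multiset ℝ)) (g : ℝ → ℝ) :
    ∑ j, g (lam j) = g l1 + g l2 + g l3 + g 0 := by
  have h : (Multiset.map g (Multiset.map lam Finset.univ.val)).sum
      = (Multiset.map g ({l1, l2, l3, 0} : Multiset ℝ)).sum := by rw [heig]
  rw [Multiset.map_map] at h
  simp only [Multiset.insert_eq_cons, Multiset.map_cons, Multiset.sum_cons,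
    Multiset.map_singleton, Multiset.sum_singleton] at h
  rw [show ∑ j, g (lam j)
    = (Multiset.map (g ∘ lam) Finset.univ.val).sum from rfl, h]
  ring

lemma quad_spectral {A : Matrix ι ι ℂ} (hA : A.IsHermitian) (x : ι → ℂ) :
    star x ⬝ᵥ (A *ᵥ x) = ∑ j, (hA.eigenvalues j : ℂ) *
      ((‖⟪hA.eigenvectorBasis j,
        ((WithLp.equiv 2 (ι → ℂ)).symm x : EuclideanSpace ℂ ι)⟫_ℂ‖ ^ 2 : ℝ) : ℂ) := by
  set V := (hA.eigenvectorUnitary : Matrix ι ι ℂ) with hV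
  set y := star V *ᵥ x with hy
  have h1 : A *ᵥ x = V *ᵥ (diagonal (RCLike.ofReal ∘ hA.eigenvalues) *ᵥ y) := by
    rw [hy, mulVec_mulVec, mulVec_mulVec]
    conv_lhs => rw [hA.spectral_theorem, Unitary.conjStarAlgAut_apply]
  have h2 : star x ᵥ* V = star y := by
    rw [hy, star_mulVec, star_eq_conjTranspose, conjTranspose_conjTranspose]
  rw [h1, dotProduct_mulVec, h2]
  simp only [dotProduct, mulVec_diagonal, Pi.star_apply, Function.comp_apply]
  refine Finset.sum_congr rfl fun j _ => ?_
  have hyj : ⟪hA.eigenvectorBasis j,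
      ((WithLp.equiv 2 (ι → ℂ)).symm x : EuclideanSpace ℂ ι)⟫_ℂ = y j := by
    rw [EuclideanSpace.inner_eq_star_dotProduct]
    simp [hy, mulVec, dotProduct, hV, Complex.star_def]
    exact Finset.sum_congr rfl fun i _ => mul_comm _ _
  rw [hyj, ← mul_assoc, mul_comm (star (y j)), mul_assoc, Complex.star_def, RCLike.conj_mul]
  norm_cast

lemma sum_two_quads_le {A : Matrix ι ι ℂ} (hA : A.IsHermitian)
    {l1 l2 l3 : ℝ} (h21 : l2 ≤ l1) (h32 : l3 ≤ l2) (h3 : 0 ≤ l3)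
    (heig : Finset.univ.val.map hA.eigenvalues = ({l1, l2, l3, 0} : Multiset ℝ))
    (x y : ι → ℂ) (hx : star x ⬝ᵥ x = 1) (hy : star y ⬝ᵥ y = 1) (hxy : star x ⬝ᵥ y = 0) :
    (star x ⬝ᵥ (A *ᵥ x)).re + (star y ⬝ᵥ (A *ᵥ y)).re ≤ l1 + l2 := by
  have hl2 : (0:ℝ) ≤ l2 := h3.trans h32
  have hsum := eig_multiset_sum heig
  set ex : EuclideanSpace ℂ ι := (WithLp.equiv 2 (ι → ℂ)).symm x with hex
  set ey : EuclideanSpace ℂ ι := (WithLp.equiv 2 (ι → ℂ)).symm y with hey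
  have hinner : ∀ u v : ι → ℂ,
      ⟪((WithLp.equiv 2 (ι → ℂ)).symm u : EuclideanSpace ℂ ι),
        ((WithLp.equiv 2 (ι → ℂ)).symm v : EuclideanSpace ℂ ι)⟫_ℂ = star u ⬝ᵥ v :=
    fun u v => dotProduct_comm _ _
  have hnx : ‖ex‖ = 1 := by
    have h2 : ‖ex‖ ^ 2 = 1 := by
      rw [← inner_self_eq_norm_sq (𝕜 := ℂ), hex, hinner x x, hx]; simp
    nlinarith [norm_nonneg ex]
  have hny : ‖ey‖ = 1 := by
    have h2 : ‖ey‖ ^ 2 = 1 := by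
      rw [← inner_self_eq_norm_sq (𝕜 := ℂ), hey, hinner y y, hy]; simp
    nlinarith [norm_nonneg ey]
  have hyx : star y ⬝ᵥ x = 0 := by
    rw [star_dotProduct, hxy, star_zero]
  have hON : Orthonormal ℂ ![ex, ey] := by
    rw [orthonormal_iff_ite]
    intro i j
    fin_cases i <;> fin_cases j <;>
      simp only [Matrix.cons_val_zero, Matrix.cons_val_one, Matrix.head_cons, hex, hey,
        hinner] <;>
      rw [EuclideanSpace.inner_eq_star_dotProduct] <;>
      norm_num <;>
      first
        | simpa [dotProduct, Complex.star_def, mul_comm] using hx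
        | simpa [dotProduct, Complex.star_def, mul_comm] using hy
        | simpa [dotProduct, Complex.star_def, mul_comm] using hxy
        | simpa [dotProduct, Complex.star_def, mul_comm] using hyx
  set b := hA.eigenvectorBasis with hb
  set lam := hA.eigenvalues with hlam
  set a : ι → ℝ := fun j => ‖(⟪b j, ex⟫_ℂ : ℂ)‖ ^ 2 + ‖(⟪b j, ey⟫_ℂ : ℂ)‖ ^ 2 with ha
  have ha0 : ∀ j, 0 ≤ a j := fun j => by positivity
  have ha1 : ∀ j, a j ≤ 1 := by
    intro j
    have hB := hON.sum_inner_products_le (𝕜 := ℂ) (b j) (s := Finset.univ)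
    rw [Fin.sum_univ_two] at hB
    simp only [Matrix.cons_val_zero, Matrix.cons_val_one, Matrix.head_cons] at hB
    rw [norm_inner_symm ex (b j), norm_inner_symm ey (b j)] at hB
    have h1 : ‖b j‖ = 1 := hA.eigenvectorBasis.orthonormal.1 j
    calc a j = ‖(⟪b j, ex⟫_ℂ : ℂ)‖ ^ 2 + ‖(⟪b j, ey⟫_ℂ : ℂ)‖ ^ 2 := rfl
      _ ≤ ‖b j‖ ^ 2 := hB
      _ = 1 := by rw [h1]; norm_num
  have haP : ∑ j, a j = 2 := by
    have P : ∀ z : EuclideanSpace ℂ ι, ‖z‖ = 1 → ∑ j, ‖(⟪b j, z⟫_ℂ : ℂ)‖ ^ 2 = 1 := by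
      intro z hz
      have h0 := hA.eigenvectorBasis.sum_inner_mul_inner z z
      have h2 : ∀ j, ⟪z, b j⟫_ℂ * ⟪b j, z⟫_ℂ = ((‖(⟪b j, z⟫_ℂ : ℂ)‖ ^ 2 : ℝ) : ℂ) := by
        intro j
        rw [← inner_conj_symm z (b j), RCLike.conj_mul]
        norm_cast
      rw [Finset.sum_congr rfl (fun j _ => h2 j)] at h0
      have h3 := congrArg Complex.re h0
      rw [Complex.re_sum] at h3
      simp only [Complex.ofReal_re] at h3
      have h4 : (⟪z, z⟫_ℂ).re = ‖z‖ ^ 2 := by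
        rw [← RCLike.re_to_complex]
        exact inner_self_eq_norm_sq z
      rw [h3, h4, hz]; norm_num
    rw [ha]
    rw [Finset.sum_add_distrib, P ex hnx, P ey hny]
    norm_num
  have hq : (star x ⬝ᵥ (A *ᵥ x)).re + (star y ⬝ᵥ (A *ᵥ y)).re = ∑ j, lam j * a j := by
    rw [quad_spectral hA x, quad_spectral hA y]
    rw [Complex.re_sum, Complex.re_sum, ← Finset.sum_add_distrib]
    refine Finset.sum_congr rfl fun j _ => ?_
    rw [← Complex.ofReal_mul, ← Complex.ofReal_mul, Complex.ofReal_re, Complex.ofReal_re]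
    show lam j * ‖(⟪b j, ex⟫_ℂ : ℂ)‖ ^ 2 + lam j * ‖(⟪b j, ey⟫_ℂ : ℂ)‖ ^ 2 = lam j * a j
    rw [ha]
    ring
  rw [hq]
  have key : ∀ j, lam j * a j ≤ max (lam j - l2) 0 + l2 * a j := by
    intro j
    rcases le_total (lam j) l2 with h | h
    · nlinarith [ha0 j, le_max_right (lam j - l2) (0:ℝ),
        mul_le_mul_of_nonneg_right h (ha0 j)]
    · have hm : max (lam j - l2) 0 = lam j - l2 := max_eq_left (by linarith)
      rw [hm]
      nlinarith [ha1 j, ha0 j]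
  calc ∑ j, lam j * a j ≤ ∑ j, (max (lam j - l2) 0 + l2 * a j) :=
        Finset.sum_le_sum fun j _ => key j
    _ = (∑ j, max (lam j - l2) 0) + l2 * ∑ j, a j := by
        rw [Finset.sum_add_distrib, Finset.mul_sum]
    _ = (l1 - l2) + l2 * 2 := by
        rw [hsum (fun t => max (t - l2) 0), haP]
        rw [max_eq_left (by linarith), max_eq_right (by linarith), max_eq_right (by linarith),
          max_eq_right (by linarith)]
        ring
    _ = l1 + l2 := by ring

lemma unitary_dot {U : Matrix ι ι ℂ} (hU : U * Uᴴ = 1) (w₁ w₂ : ι → ℂ) :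
    star (Uᴴ *ᵥ w₁) ⬝ᵥ (Uᴴ *ᵥ w₂) = star w₁ ⬝ᵥ w₂ := by
  rw [star_mulVec, conjTranspose_conjTranspose, dotProduct_mulVec, vecMul_vecMul, hU,
    vecMul_one]

lemma quad_conj {U : Matrix ι ι ℂ} (G : Matrix ι ι ℂ) (w : ι → ℂ) :
    star w ⬝ᵥ ((U * G * Uᴴ) *ᵥ w) = star (Uᴴ *ᵥ w) ⬝ᵥ (G *ᵥ (Uᴴ *ᵥ w)) := by
  have h : (U * G * Uᴴ) *ᵥ w = U *ᵥ (G *ᵥ (Uᴴ *ᵥ w)) := by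
    rw [mulVec_mulVec, mulVec_mulVec]
  rw [h]
  conv_rhs => rw [star_mulVec, conjTranspose_conjTranspose]
  conv_lhs => rw [dotProduct_mulVec]

lemma trace_eq_sum_eig {A : Matrix ι ι ℂ} (hA : A.IsHermitian) :
    A.trace = ∑ i, (hA.eigenvalues i : ℂ) := by
  conv_lhs => rw [hA.spectral_theorem, Unitary.conjStarAlgAut_apply]
  rw [trace_mul_cycle]
  have h1 : star (hA.eigenvectorUnitary : Matrix ι ι ℂ) * (hA.eigenvectorUnitary : Matrix ι ι ℂ)
      = 1 := mul_eq_one_comm.mp (mem_unitaryGroup_iff.mp hA.eigenvectorUnitary.2)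
  rw [h1, one_mul, trace_diagonal]
  rfl

lemma unit_eigvec {R : Matrix ι ι ℂ} (hR : R.IsHermitian) (i : ι) :
    star ⇑(hR.eigenvectorBasis i) ⬝ᵥ ⇑(hR.eigenvectorBasis i) = 1 := by
  have h1 : ‖hR.eigenvectorBasis i‖ = 1 := hR.eigenvectorBasis.orthonormal.1 i
  calc star ⇑(hR.eigenvectorBasis i) ⬝ᵥ ⇑(hR.eigenvectorBasis i)
      = ⟪hR.eigenvectorBasis i, hR.eigenvectorBasis i⟫_ℂ := dotProduct_comm _ _
    _ = (‖hR.eigenvectorBasis i‖ : ℂ) ^ 2 := inner_self_eq_norm_sq_to_K _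
    _ = 1 := by rw [h1]; norm_num

lemma eig_le_of_quads {R : Matrix ι ι ℂ} (hR : R.IsHermitian) {c : ℝ}
    (h : ∀ v : ι → ℂ, star v ⬝ᵥ v = 1 → (star v ⬝ᵥ (R *ᵥ v)).re ≤ c) (i : ι) :
    hR.eigenvalues i ≤ c := by
  rw [hR.eigenvalues_eq i]
  exact h _ (unit_eigvec hR i)

end Spectral

section Reduced

def wS (v : Fin 2 → ℂ) (i : Fin 2) : Fin 2 × Fin 2 → ℂ :=
  fun p => v p.1 * (if p.2 = i then 1 else 0)

def wP (v : Fin 2 → ℂ) (k : Fin 2) : Fin 2 × Fin 2 → ℂ :=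
  fun p => v p.2 * (if p.1 = k then 1 else 0)

lemma redS_quad (M : Matrix (Fin 2 × Fin 2) (Fin 2 × Fin 2) ℂ) (v : Fin 2 → ℂ) :
    star v ⬝ᵥ (redS M *ᵥ v) = ∑ i : Fin 2, star (wS v i) ⬝ᵥ (M *ᵥ wS v i) := by
  simp only [redS, wS, mulVec, dotProduct, Matrix.of_apply, Pi.star_apply,
    Fintype.sum_prod_type, Fin.sum_univ_two, star_mul', star_one, star_zero,
    Fin.isValue]
  norm_num
  ring

lemma redP_quad (M : Matrix (Fin 2 × Fin 2) (Fin 2 × Fin 2) ℂ) (v : Fin 2 → ℂ) :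
    star v ⬝ᵥ (redP M *ᵥ v) = ∑ k : Fin 2, star (wP v k) ⬝ᵥ (M *ᵥ wP v k) := by
  simp only [redP, wP, mulVec, dotProduct, Matrix.of_apply, Pi.star_apply,
    Fintype.sum_prod_type, Fin.sum_univ_two, star_mul', star_one, star_zero,
    Fin.isValue]
  norm_num
  ring

lemma wS_dot (v : Fin 2 → ℂ) (i j : Fin 2) :
    star (wS v i) ⬝ᵥ wS v j = if i = j then star v ⬝ᵥ v else 0 := by
  fin_cases i <;> fin_cases j <;>
    simp [wS, dotProduct, Fintype.sum_prod_type, Fin.sum_univ_two]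

lemma wP_dot (v : Fin 2 → ℂ) (i j : Fin 2) :
    star (wP v i) ⬝ᵥ wP v j = if i = j then star v ⬝ᵥ v else 0 := by
  fin_cases i <;> fin_cases j <;>
    simp [wP, dotProduct, Fintype.sum_prod_type, Fin.sum_univ_two]

lemma redS_trace (M : Matrix (Fin 2 × Fin 2) (Fin 2 × Fin 2) ℂ) :
    (redS M).trace = M.trace := by
  simp [redS, trace, Matrix.diag, Fintype.sum_prod_type]

lemma redP_trace (M : Matrix (Fin 2 × Fin 2) (Fin 2 × Fin 2) ℂ) :
    (redP M).trace = M.trace := by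
  simp [redP, trace, Matrix.diag, Fintype.sum_prod_type, Fin.sum_univ_two]
  ring

lemma entropy_bound {R : Matrix (Fin 2) (Fin 2) ℂ} (hR : R.IsHermitian)
    {l1 l2 l3 : ℝ} (h21 : l2 ≤ l1) (h32 : l3 ≤ l2) (h3 : 0 < l3) (hsum1 : l1 + l2 + l3 = 1)
    (htr : R.trace = 1) (hle : ∀ i, hR.eigenvalues i ≤ l1 + l2) :
    0 < entropy hR ∧ fEnt (l1 + l2) ≤ entropy hR := by
  have hl12 : l1 + l2 = 1 - l3 := by linarith
  have htr2 : hR.eigenvalues 0 + hR.eigenvalues 1 = 1 := by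
    have h := trace_eq_sum_eig hR
    rw [htr, Fin.sum_univ_two] at h
    exact_mod_cast h.symm
  have he1 : hR.eigenvalues 1 = 1 - hR.eigenvalues 0 := by linarith
  have hb0 : hR.eigenvalues 0 ≤ 1 - l3 := by rw [← hl12]; exact hle 0
  have hb1 : l3 ≤ hR.eigenvalues 0 := by
    have := hle 1; rw [hl12] at this; linarith
  have hent : entropy hR = fEnt (hR.eigenvalues 0) := by
    rw [entropy, Fin.sum_univ_two, he1, fEnt]
    ring
  have hl3half : l3 ≤ 2⁻¹ := by linarith
  have hm : fEnt (l1 + l2) ≤ fEnt (hR.eigenvalues 0) := by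
    rw [hl12]; exact fEnt_anti h3 hl3half hb1 (by linarith)
  have hp : 0 < fEnt (l1 + l2) := fEnt_pos (by linarith) (by linarith)
  exact ⟨lt_of_lt_of_le hp (hent ▸ hm), hent ▸ hm⟩

end Reduced

/-- For a trace-1 Hermitian positive semidefinite 4×4 coherence matrix of rank exactly 3 with
nonzero eigenvalues `l1 ≥ l2 ≥ l3 > 0`, under every global unitary the entropies of both
reduced coherence matrices are strictly positive, being bounded below by `f(l1 + l2) > 0`:
some entropy is always locked in each degree of freedom. -/
theorem rank_three_locked_entropy
    (G : Matrix (Fin 2 × Fin 2) (Fin 2 × Fin 2) ℂ) (hG : G.PosSemidef)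
    (htr : G.trace = 1) (hrank : G.rank = 3)
    (l1 l2 l3 : ℝ) (h21 : l2 ≤ l1) (h32 : l3 ≤ l2) (h3 : 0 < l3)
    (heig : Finset.univ.val.map hG.isHermitian.eigenvalues =
      ({l1, l2, l3, 0} : Multiset ℝ)) :
    0 < fEnt (l1 + l2) ∧
      ∀ U : Matrix (Fin 2 × Fin 2) (Fin 2 × Fin 2) ℂ, U * Uᴴ = 1 →
        (∀ hs : (redS (U * G * Uᴴ)).IsHermitian,
          0 < entropy hs ∧ fEnt (l1 + l2) ≤ entropy hs) ∧
        (∀ hp : (redP (U * G * Uᴴ)).IsHermitian,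
          0 < entropy hp ∧ fEnt (l1 + l2) ≤ entropy hp) := by
  have hsum1 : l1 + l2 + l3 = 1 := by
    have h := trace_eq_sum_eig hG.isHermitian
    rw [htr] at h
    have hs : ∑ i, hG.isHermitian.eigenvalues i = l1 + l2 + l3 + 0 :=
      eig_multiset_sum heig id
    have h2 : ((l1 + l2 + l3 + 0 : ℝ) : ℂ) = 1 := by
      rw [← hs, Complex.ofReal_sum, ← h]
    have h3' : (l1 + l2 + l3 + 0 : ℝ) = 1 := by exact_mod_cast h2
    linarith
  refine ⟨fEnt_pos (by linarith) (by linarith), ?_⟩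
  intro U hU
  have htrM : (U * G * Uᴴ).trace = 1 := by
    rw [trace_mul_cycle, mul_eq_one_comm.mp hU, one_mul, htr]
  have hquadS : ∀ v : Fin 2 → ℂ, star v ⬝ᵥ v = 1 →
      (star v ⬝ᵥ (redS (U * G * Uᴴ) *ᵥ v)).re ≤ l1 + l2 := by
    intro v hv
    rw [redS_quad, Fin.sum_univ_two, quad_conj G (wS v 0), quad_conj G (wS v 1), Complex.add_re]
    apply sum_two_quads_le hG.isHermitian h21 h32 h3.le heig
    · rw [unitary_dot hU, wS_dot]; simp [hv]
    · rw [unitary_dot hU, wS_dot]; simp [hv]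
    · rw [unitary_dot hU, wS_dot]; simp
  have hquadP : ∀ v : Fin 2 → ℂ, star v ⬝ᵥ v = 1 →
      (star v ⬝ᵥ (redP (U * G * Uᴴ) *ᵥ v)).re ≤ l1 + l2 := by
    intro v hv
    rw [redP_quad, Fin.sum_univ_two, quad_conj G (wP v 0), quad_conj G (wP v 1), Complex.add_re]
    apply sum_two_quads_le hG.isHermitian h21 h32 h3.le heig
    · rw [unitary_dot hU, wP_dot]; simp [hv]
    · rw [unitary_dot hU, wP_dot]; simp [hv]
    · rw [unitary_dot hU, wP_dot]; simp
  constructor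
  · intro hs
    exact entropy_bound hs h21 h32 h3 hsum1 (by rw [redS_trace]; exact htrM)
      (eig_le_of_quads hs hquadS)
  · intro hp
    exact entropy_bound hp h21 h32 h3 hsum1 (by rw [redP_trace]; exact htrM)
      (eig_le_of_quads hp hquadP)
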